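/- Let 0 < λ < 1, d ≥ 1. If v solves the system dv_k/dt = λ(v_{k-1}-v_k) - (1-v_{k+1})^d + (1-v_k)^d with v_0 ≡ 1 and ∑_k v_k(0) < ∞, then for each k ≥ 1, ∑_{i≥k} v_i(t) - ∑_{i≥k} v_i(0) = ∫_0^t [λ(v_{k-1}(s) - v*_{k-1}) + (1-v_k(s))^d - (1-v*_k)^d] ds, where v* is defined by v*_0 = 1, v*_k = 1-(1-λ v*_{k-1})^{1/d}. -/

import Mathlib

open intervalIntegral Filter MeasureTheory

private lemma tele_sum (lam : ℝ) (d : ℕ) (v : ℕ → ℝ → ℝ) (s : ℝ) (k : ℕ) (N : ℕ) :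
    ∑ i ∈ Finset.range N,
      (lam * (v (k + i) s - v (k + 1 + i) s) - (1 - v (k + 2 + i) s) ^ d
        + (1 - v (k + 1 + i) s) ^ d)
    = lam * (v k s - v (k + N) s) + ((1 - v (k + 1) s) ^ d - (1 - v (k + 1 + N) s) ^ d) := by
  induction N with
  | zero => simp
  | succ N ih =>
    rw [Finset.sum_range_succ, ih]
    have e1 : k + (N + 1) = k + 1 + N := by omega
    have e2 : k + 1 + (N + 1) = k + 2 + N := by omega
    rw [e1, e2]; ring

private lemma ftc_partial (lam : ℝ) (d : ℕ) (v : ℕ → ℝ → ℝ)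
    (hcont : ∀ m, ContinuousOn (v m) (Set.Ici 0))
    (hode : ∀ k t, 0 ≤ t → HasDerivAt (v (k + 1))
      (lam * (v k t - v (k + 1) t) - (1 - v (k + 2) t) ^ d + (1 - v (k + 1) t) ^ d) t)
    (k N : ℕ) (t : ℝ) (ht : 0 ≤ t) :
    (∑ i ∈ Finset.range N, v (k + 1 + i) t) - (∑ i ∈ Finset.range N, v (k + 1 + i) 0)
      = ∫ s in (0:ℝ)..t,
          (lam * (v k s - v (k + N) s)
            + ((1 - v (k + 1) s) ^ d - (1 - v (k + 1 + N) s) ^ d)) := by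
  have hicc : Set.uIcc (0:ℝ) t = Set.Icc 0 t := Set.uIcc_of_le ht
  have hci : ∀ m, ContinuousOn (v m) (Set.uIcc (0:ℝ) t) := fun m =>
    (hcont m).mono (by rw [hicc]; exact fun x hx => hx.1)
  have hint : IntervalIntegrable (fun s => lam * (v k s - v (k + N) s)
      + ((1 - v (k + 1) s) ^ d - (1 - v (k + 1 + N) s) ^ d)) MeasureTheory.volume 0 t := by
    apply ContinuousOn.intervalIntegrable
    exact (continuousOn_const.mul ((hci k).sub (hci (k+N)))).add
      (((continuousOn_const.sub (hci (k+1))).pow d).sub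
        ((continuousOn_const.sub (hci (k+1+N))).pow d))
  have hder : ∀ s ∈ Set.uIcc (0:ℝ) t,
      HasDerivAt (fun u => ∑ i ∈ Finset.range N, v (k + 1 + i) u)
        (lam * (v k s - v (k + N) s)
          + ((1 - v (k + 1) s) ^ d - (1 - v (k + 1 + N) s) ^ d)) s := by
    intro s hs
    rw [hicc] at hs
    have hds : ∀ i ∈ Finset.range N, HasDerivAt (v (k + 1 + i))
        (lam * (v (k + i) s - v (k + 1 + i) s) - (1 - v (k + 2 + i) s) ^ d
          + (1 - v (k + 1 + i) s) ^ d) s := by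
      intro i _
      have e1 : k + i + 1 = k + 1 + i := by omega
      have e2 : k + i + 2 = k + 2 + i := by omega
      have h := hode (k + i) s hs.1
      rw [e1, e2] at h
      exact h
    have h2 := HasDerivAt.fun_sum hds
    rwa [tele_sum] at h2
  exact (intervalIntegral.integral_eq_sub_of_hasDerivAt hder hint).symm


/-- integral identity for tail sums of the fluid limit: for k ≥ 1,
∑_{i≥k} v_i(t) - ∑_{i≥k} v_i(0)
  = ∫_0^t [λ(v_{k-1}(s) - v*_{k-1}) + (1-v_k(s))^d - (1-v*_k)^d] ds.
(Here index k of the statement is k+1 below.) -/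
theorem stmt15 (lam : ℝ) (hl0 : 0 < lam) (hl1 : lam < 1) (d : ℕ) (hd : 1 ≤ d)
    (v : ℕ → ℝ → ℝ)
    (hv0 : ∀ t, 0 ≤ t → v 0 t = 1)
    (hbdd : ∀ k t, 0 ≤ t → v k t ∈ Set.Icc (0 : ℝ) 1)
    (hmono : ∀ k t, 0 ≤ t → v (k + 1) t ≤ v k t)
    (hode : ∀ k t, 0 ≤ t → HasDerivAt (v (k + 1))
      (lam * (v k t - v (k + 1) t) - (1 - v (k + 2) t) ^ d + (1 - v (k + 1) t) ^ d) t)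
    (hsum0 : Summable (fun k => v (k + 1) 0))
    (w : ℕ → ℝ) (hw0 : w 0 = 1)
    (hw : ∀ k, w (k + 1) = 1 - (1 - lam * w k) ^ (1 / (d : ℝ))) :
    ∀ k t, 0 ≤ t →
      (∑' i, v (k + 1 + i) t) - (∑' i, v (k + 1 + i) 0)
        = ∫ s in (0 : ℝ)..t,
            (lam * (v k s - w k) + (1 - v (k + 1) s) ^ d - (1 - w (k + 1)) ^ d) := by
  -- continuity of the coordinates on [0,∞)
  have hcont : ∀ m, ContinuousOn (v m) (Set.Ici 0) := by
    intro m
    match m with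
    | 0 => exact continuousOn_const.congr (fun s hs => hv0 s hs)
    | (n+1) => exact fun s hs => ((hode n s hs).continuousAt).continuousWithinAt
  -- bounds on w
  have hw01 : ∀ m, 0 ≤ w m ∧ w m ≤ 1 := by
    intro m
    induction m with
    | zero => rw [hw0]; constructor <;> norm_num
    | succ n ih =>
      rw [hw n]
      have hx0 : (0:ℝ) ≤ 1 - lam * w n := by nlinarith [ih.1, ih.2]
      have hx1 : 1 - lam * w n ≤ 1 := by nlinarith [ih.1]
      have h1 : (1 - lam * w n) ^ (1/(d:ℝ)) ≤ 1 :=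
        Real.rpow_le_one hx0 hx1 (by positivity)
      have h2 : (0:ℝ) ≤ (1 - lam * w n) ^ (1/(d:ℝ)) := Real.rpow_nonneg hx0 _
      constructor <;> linarith
  have hwpow : ∀ m, (1 - w (m + 1)) ^ d = 1 - lam * w m := by
    intro m
    rw [hw m]
    have hx0 : (0:ℝ) ≤ 1 - lam * w m := by nlinarith [(hw01 m).1, (hw01 m).2]
    have : (1:ℝ) - (1 - (1 - lam * w m) ^ (1/(d:ℝ))) = (1 - lam * w m) ^ (1/(d:ℝ)) := by ring
    rw [this, ← Real.rpow_natCast ((1 - lam * w m) ^ (1/(d:ℝ))) d, ← Real.rpow_mul hx0,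
      one_div_mul_cancel (by exact_mod_cast Nat.one_le_iff_ne_zero.mp hd), Real.rpow_one]
  -- uniform bound on partial sums
  have hPle : ∀ (N : ℕ) (s : ℝ), 0 ≤ s → ∑ i ∈ Finset.range N, v (i + 1) s
      ≤ (∑' i, v (i + 1) 0) + (lam + 1) * s := by
    intro N s hs
    have key := ftc_partial lam d v hcont hode 0 N s hs
    have hidx : ∀ u : ℝ, ∑ i ∈ Finset.range N, v (0 + 1 + i) u
        = ∑ i ∈ Finset.range N, v (i + 1) u := by
      intro u; exact Finset.sum_congr rfl (fun i _ => by rw [show 0 + 1 + i = i + 1 by omega])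
    rw [hidx, hidx] at key
    have hicc : Set.uIcc (0:ℝ) s = Set.Icc 0 s := Set.uIcc_of_le hs
    have hci : ∀ m, ContinuousOn (v m) (Set.uIcc (0:ℝ) s) := fun m =>
      (hcont m).mono (by rw [hicc]; exact fun x hx => hx.1)
    have hint : IntervalIntegrable (fun u => lam * (v 0 u - v (0 + N) u)
        + ((1 - v (0 + 1) u) ^ d - (1 - v (0 + 1 + N) u) ^ d)) MeasureTheory.volume 0 s := by
      apply ContinuousOn.intervalIntegrable
      exact (continuousOn_const.mul ((hci 0).sub (hci (0+N)))).add
        (((continuousOn_const.sub (hci (0+1))).pow d).sub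
          ((continuousOn_const.sub (hci (0+1+N))).pow d))
    have hbI : (∫ u in (0:ℝ)..s, (lam * (v 0 u - v (0 + N) u)
        + ((1 - v (0 + 1) u) ^ d - (1 - v (0 + 1 + N) u) ^ d)))
        ≤ ∫ _u in (0:ℝ)..s, (lam + 1) := by
      apply intervalIntegral.integral_mono_on hs hint intervalIntegrable_const
      intro u hu
      have h0 : v 0 u = 1 := hv0 u hu.1
      have h1 := hbdd (0 + N) u hu.1
      have h2 := hbdd (0 + 1) u hu.1
      have h3 := hbdd (0 + 1 + N) u hu.1
      have hp1 : (1 - v (0 + 1) u) ^ d ≤ 1 :=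
        pow_le_one₀ (by linarith [h2.2]) (by linarith [h2.1])
      have hp2 : (0:ℝ) ≤ (1 - v (0 + 1 + N) u) ^ d := pow_nonneg (by linarith [h3.2]) d
      nlinarith [h1.1]
    rw [intervalIntegral.integral_const, smul_eq_mul, sub_zero] at hbI
    have hsum_le : ∑ i ∈ Finset.range N, v (i + 1) 0 ≤ ∑' i, v (i + 1) 0 :=
      Summable.sum_le_tsum (Finset.range N) (fun i _ => (hbdd (i+1) 0 le_rfl).1) hsum0
    nlinarith [key, hbI, hsum_le]
  -- summability at any time
  have hsumt : ∀ s : ℝ, 0 ≤ s → Summable (fun i => v (i + 1) s) := by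
    intro s hs
    exact summable_of_sum_range_le (fun i => (hbdd (i+1) s hs).1) (fun N => hPle N s hs)
  intro k t ht
  have hicc : Set.uIcc (0:ℝ) t = Set.Icc 0 t := Set.uIcc_of_le ht
  have hci : ∀ m, ContinuousOn (v m) (Set.uIcc (0:ℝ) t) := fun m =>
    (hcont m).mono (by rw [hicc]; exact fun x hx => hx.1)
  have hvint : ∀ m, IntervalIntegrable (v m) MeasureTheory.volume 0 t := fun m =>
    (hci m).intervalIntegrable
  -- the integrals I i = ∫ v (i+1) form a summable family
  set C : ℝ := (∑' i, v (i + 1) 0) + (lam + 1) * t with hC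
  have hIsum : Summable (fun i => ∫ u in (0:ℝ)..t, v (i + 1) u) := by
    apply summable_of_sum_range_le (c := C * t)
    · intro i
      exact intervalIntegral.integral_nonneg ht (fun u hu => (hbdd (i+1) u hu.1).1)
    · intro N
      rw [← intervalIntegral.integral_finset_sum (fun i _ => hvint (i+1))]
      have hb : (∫ u in (0:ℝ)..t, ∑ i ∈ Finset.range N, v (i + 1) u)
          ≤ ∫ _u in (0:ℝ)..t, C := by
        apply intervalIntegral.integral_mono_on ht _ intervalIntegrable_const
        · intro u hu
          have := hPle N u hu.1
          have hlp : 0 ≤ lam + 1 := by linarith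
          have : (lam + 1) * u ≤ (lam + 1) * t := by nlinarith [hu.2]
          calc ∑ i ∈ Finset.range N, v (i + 1) u
              ≤ (∑' i, v (i + 1) 0) + (lam + 1) * u := hPle N u hu.1
            _ ≤ C := by rw [hC]; linarith
        · apply ContinuousOn.intervalIntegrable
          exact continuousOn_finset_sum _ (fun i _ => hci (i+1))
      rw [intervalIntegral.integral_const, smul_eq_mul, sub_zero, mul_comm] at hb
      exact hb
  -- ∫ v m → 0
  have hJ : Tendsto (fun m : ℕ => ∫ u in (0:ℝ)..t, v m u) atTop (nhds 0) := by
    have h1 : Tendsto (fun m : ℕ => ∫ u in (0:ℝ)..t, v ((m - 1) + 1) u) atTop (nhds 0) :=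
      hIsum.tendsto_atTop_zero.comp (tendsto_sub_atTop_nat 1)
    apply h1.congr'
    filter_upwards [eventually_ge_atTop 1] with m hm
    rw [Nat.sub_add_cancel hm]
  have hJk : Tendsto (fun N : ℕ => ∫ u in (0:ℝ)..t, v (k + N) u) atTop (nhds 0) := by
    have := hJ.comp (tendsto_add_atTop_nat k)
    exact this.congr (fun N => by simp only [Function.comp]; rw [Nat.add_comm])
  -- key identity for partial sums
  have hAB : ∀ N : ℕ, (∑ i ∈ Finset.range N, v (k + 1 + i) t)
      - (∑ i ∈ Finset.range N, v (k + 1 + i) 0)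
      = (∫ s in (0:ℝ)..t, (lam * v k s + (1 - v (k + 1) s) ^ d - 1))
        - (∫ s in (0:ℝ)..t, (lam * v (k + N) s + (1 - v (k + 1 + N) s) ^ d - 1)) := by
    intro N
    rw [ftc_partial lam d v hcont hode k N t ht]
    rw [← intervalIntegral.integral_sub]
    · apply intervalIntegral.integral_congr
      intro s _
      ring
    · apply ContinuousOn.intervalIntegrable
      exact ((continuousOn_const.mul (hci k)).add
        ((continuousOn_const.sub (hci (k+1))).pow d)).sub continuousOn_const
    · apply ContinuousOn.intervalIntegrable
      exact ((continuousOn_const.mul (hci (k+N))).add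
        ((continuousOn_const.sub (hci (k+1+N))).pow d)).sub continuousOn_const
  -- the remainder integral tends to 0
  have hHint : ∀ N : ℕ, IntervalIntegrable
      (fun s => lam * v (k + N) s + (1 - v (k + 1 + N) s) ^ d - 1) MeasureTheory.volume 0 t := by
    intro N
    apply ContinuousOn.intervalIntegrable
    exact ((continuousOn_const.mul (hci (k+N))).add
      ((continuousOn_const.sub (hci (k+1+N))).pow d)).sub continuousOn_const
  have hHlim : Tendsto
      (fun N : ℕ => ∫ s in (0:ℝ)..t, (lam * v (k + N) s + (1 - v (k + 1 + N) s) ^ d - 1))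
      atTop (nhds 0) := by
    have hlow : ∀ N : ℕ, -(d:ℝ) * (∫ u in (0:ℝ)..t, v (k + N) u)
        ≤ ∫ s in (0:ℝ)..t, (lam * v (k + N) s + (1 - v (k + 1 + N) s) ^ d - 1) := by
      intro N
      rw [← intervalIntegral.integral_const_mul]
      apply intervalIntegral.integral_mono_on ht
        (by apply ContinuousOn.intervalIntegrable; exact continuousOn_const.mul (hci (k+N)))
        (hHint N)
      intro s hs
      have h1 := hbdd (k + N) s hs.1
      have h2 := hbdd (k + 1 + N) s hs.1
      have hber : 1 - (d:ℝ) * v (k + 1 + N) s ≤ (1 - v (k + 1 + N) s) ^ d := by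
        have := one_add_mul_le_pow (a := -(v (k + 1 + N) s)) (by linarith [h2.2]) d
        calc 1 - (d:ℝ) * v (k + 1 + N) s = 1 + (d:ℝ) * (-(v (k + 1 + N) s)) := by ring
          _ ≤ (1 + -(v (k + 1 + N) s)) ^ d := this
          _ = (1 - v (k + 1 + N) s) ^ d := by ring_nf
      have hmo : v (k + 1 + N) s ≤ v (k + N) s := by
        have := hmono (k + N) s hs.1
        rwa [show k + N + 1 = k + 1 + N by omega] at this
      nlinarith [h1.1, hl0.le]
    have hup : ∀ N : ℕ, (∫ s in (0:ℝ)..t, (lam * v (k + N) s + (1 - v (k + 1 + N) s) ^ d - 1))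
        ≤ lam * (∫ u in (0:ℝ)..t, v (k + N) u) := by
      intro N
      rw [← intervalIntegral.integral_const_mul]
      apply intervalIntegral.integral_mono_on ht (hHint N)
        (by apply ContinuousOn.intervalIntegrable; exact continuousOn_const.mul (hci (k+N)))
      intro s hs
      have h2 := hbdd (k + 1 + N) s hs.1
      have hp : (1 - v (k + 1 + N) s) ^ d ≤ 1 :=
        pow_le_one₀ (by linarith [h2.2]) (by linarith [h2.1])
      linarith
    have hl : Tendsto (fun N : ℕ => -(d:ℝ) * (∫ u in (0:ℝ)..t, v (k + N) u)) atTop (nhds 0) := by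
      have := hJk.const_mul (-(d:ℝ)); simpa using this
    have hu : Tendsto (fun N : ℕ => lam * (∫ u in (0:ℝ)..t, v (k + N) u)) atTop (nhds 0) := by
      have := hJk.const_mul lam; simpa using this
    exact tendsto_of_tendsto_of_tendsto_of_le_of_le hl hu hlow hup
  -- shifted summability and convergence of partial sums
  have hsh : ∀ s : ℝ, 0 ≤ s → Summable (fun i => v (k + 1 + i) s) := by
    intro s hs
    have := (hsumt s hs).comp_injective (i := fun i : ℕ => k + i) (add_right_injective k)
    exact this.congr (fun i => by simp only [Function.comp]; rw [show k + i + 1 = k + 1 + i by omega])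
  have hA := (hsh t ht).hasSum.tendsto_sum_nat
  have hB := (hsh 0 le_rfl).hasSum.tendsto_sum_nat
  have hLHS : Tendsto (fun N => (∑ i ∈ Finset.range N, v (k + 1 + i) t)
      - (∑ i ∈ Finset.range N, v (k + 1 + i) 0)) atTop
      (nhds ((∑' i, v (k + 1 + i) t) - (∑' i, v (k + 1 + i) 0))) := hA.sub hB
  have hRHS : Tendsto (fun N => (∑ i ∈ Finset.range N, v (k + 1 + i) t)
      - (∑ i ∈ Finset.range N, v (k + 1 + i) 0)) atTop
      (nhds ((∫ s in (0:ℝ)..t, (lam * v k s + (1 - v (k + 1) s) ^ d - 1)) - 0)) := by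
    simp_rw [hAB]
    exact tendsto_const_nhds.sub hHlim
  have hmain := tendsto_nhds_unique hLHS hRHS
  rw [sub_zero] at hmain
  rw [hmain]
  apply intervalIntegral.integral_congr
  intro s _
  rw [hwpow k]
  ring
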